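/- Squared distance between solutions of a one-sided Lipschitz differential inclusion is nonincreasing: let F : ℝ → Set ℝ satisfy (z₁ − z₂)·(w₁ − w₂) ≤ 0 for all reals w₁, w₂ and all z₁ ∈ F(w₁), z₂ ∈ F(w₂). Suppose y₁, y₂ : ℝ → ℝ are locally Lipschitz on [0,∞) and for almost every t ≥ 0 each yᵢ is differentiable at t with derivative lying in F(yᵢ(t)). Then the function t ↦ (y₁(t) − y₂(t))² is nonincreasing on [0,∞). -/

import Mathlib

open MeasureTheory Set Filter Topology
open scoped NNReal ENNReal

-- Auxiliary: a continuous function on [a,b] with uniform local slope bound L (for the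
-- right fencing) and a.e. nonpositive derivative off a null set is ≤ g a + ε at b.
theorem aux_key {g : ℝ → ℝ} {a b L : ℝ} (hab : a ≤ b) (hL : 0 ≤ L)
    (hgc : ContinuousOn g (Icc a b))
    (hslope : ∀ x ∈ Ico a b, ∀ᶠ z in 𝓝[>] x, z ∈ Icc a b → g z - g x ≤ L * (z - x))
    {S : Set ℝ} (hS0 : volume S = 0)
    (hderiv : ∀ x ∈ Ico a b, x ∉ S → ∃ g' : ℝ, g' ≤ 0 ∧ HasDerivAt g g' x) :
    g b ≤ g a := by
  refine le_of_forall_pos_le_add fun ε hε => ?_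
  have hL1 : (0:ℝ) < L + 1 := by linarith
  obtain ⟨U, hSU, hUopen, hUmeas⟩ := Set.exists_isOpen_lt_of_lt S
      (ENNReal.ofReal (ε / (L + 1)))
      (by rw [hS0]; exact ENNReal.ofReal_pos.2 (div_pos hε hL1))
  set φ : ℝ → ℝ := fun x => (volume (U ∩ Ioc a x)).toReal with hφdef
  have hfin : ∀ x, volume (U ∩ Ioc a x) ≠ ⊤ :=
    fun x => ((measure_mono inter_subset_right).trans_lt measure_Ioc_lt_top).ne
  have hφa : φ a = 0 := by simp [hφdef]
  have hφmono : Monotone φ := fun x y hxy =>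
    ENNReal.toReal_mono (hfin y)
      (measure_mono (inter_subset_inter_right _ (Ioc_subset_Ioc_right hxy)))
  have hφlip : ∀ x z : ℝ, x ≤ z → φ z ≤ φ x + (z - x) := by
    intro x z hxz
    have h1 : volume (U ∩ Ioc a z) ≤ volume (U ∩ Ioc a x) + volume (Ioc x z) := by
      refine le_trans (measure_mono ?_) (measure_union_le _ _)
      rintro w ⟨hwU, hwa, hwz⟩
      rcases le_or_gt w x with h | h
      · exact Or.inl ⟨hwU, hwa, h⟩
      · exact Or.inr ⟨h, hwz⟩
    calc φ z ≤ (volume (U ∩ Ioc a x) + volume (Ioc x z)).toReal := by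
              refine ENNReal.toReal_mono ?_ h1
              exact ENNReal.add_ne_top.2 ⟨hfin x, measure_Ioc_lt_top.ne⟩
      _ = φ x + (z - x) := by
              rw [ENNReal.toReal_add (hfin x) measure_Ioc_lt_top.ne,
                Real.volume_Ioc, ENNReal.toReal_ofReal (by linarith)]
  have hφcont : Continuous φ := by
    have : LipschitzWith 1 φ := by
      refine LipschitzWith.of_dist_le_mul fun x z => ?_
      rw [NNReal.coe_one, one_mul, Real.dist_eq, Real.dist_eq]
      rcases le_total x z with h | h
      · rw [abs_of_nonpos (by linarith [hφmono h]), abs_of_nonpos (by linarith)]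
        have := hφlip x z h; linarith
      · rw [abs_of_nonneg (by linarith [hφmono h]), abs_of_nonneg (by linarith)]
        have := hφlip z x h; linarith
    exact this.continuous
  have key : ∀ ⦃x⦄, x ∈ Icc a b → g x - L * φ x ≤ g a := by
    refine image_le_of_liminf_slope_right_le_deriv_boundary
      (f := fun x => g x - L * φ x) (B := fun _ => g a) (B' := fun _ => 0)
      (hgc.sub ((continuous_const.mul hφcont).continuousOn)) (by simp [hφa])
      continuousOn_const (fun x _ => hasDerivWithinAt_const x _ _) ?_
    intro x hx r hr
    have hr' : (0:ℝ) < r := hr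
    have hslope_phi : ∀ z, x < z → slope (fun x => g x - L * φ x) x z
        = slope g x z - L * slope φ x z := by
      intro z hz
      simp only [slope_def_field]
      field_simp
      ring
    by_cases hxU : x ∈ U
    · -- inside the open set: φ grows at rate exactly 1, and slope of g ≤ L
      obtain ⟨δ, hδ, hball⟩ := Metric.isOpen_iff.1 hUopen x hxU
      refine Filter.Eventually.frequently ?_
      have h1 : ∀ᶠ z in 𝓝[>] x, z < x + δ := by
        apply eventually_nhdsWithin_of_eventually_nhds
        exact Filter.Tendsto.eventually_lt_const (by linarith) tendsto_id
      have h2 : ∀ᶠ z in 𝓝[>] x, z < b := by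
        apply eventually_nhdsWithin_of_eventually_nhds
        exact Filter.Tendsto.eventually_lt_const hx.2 tendsto_id
      filter_upwards [h1, hslope x hx, self_mem_nhdsWithin, h2] with z hzδ hgz' (hzx : x < z) hzb
      have hgz : g z - g x ≤ L * (z - x) :=
        hgz' ⟨le_trans hx.1 hzx.le, hzb.le⟩
      have hIoc : Ioc x z ⊆ U := by
        intro w hw
        apply hball
        rw [Metric.mem_ball, Real.dist_eq, abs_of_pos (by linarith [hw.1] : (0:ℝ) < w - x)]
        linarith [hw.2]
      have hφz : φ z = φ x + (z - x) := by
        have hdisj : Disjoint (U ∩ Ioc a x) (Ioc x z) := by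
          refine Set.disjoint_left.2 ?_
          rintro w ⟨_, _, hwx⟩ ⟨hw1, _⟩
          exact absurd hw1 (not_lt.2 hwx)
        have hset : U ∩ Ioc a z = (U ∩ Ioc a x) ∪ Ioc x z := by
          apply Set.Subset.antisymm
          · rintro w ⟨hwU, hwa, hwz⟩
            rcases le_or_gt w x with h | h
            · exact Or.inl ⟨hwU, hwa, h⟩
            · exact Or.inr ⟨h, hwz⟩
          · rintro w (⟨hwU, hwa, hwx⟩ | hw)
            · exact ⟨hwU, hwa, hwx.trans hzx.le⟩
            · exact ⟨hIoc hw, lt_of_le_of_lt hx.1 hw.1, hw.2⟩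
        have : volume (U ∩ Ioc a z) = volume (U ∩ Ioc a x) + volume (Ioc x z) := by
          rw [hset, measure_union hdisj measurableSet_Ioc]
        simp only [hφdef]
        rw [this, ENNReal.toReal_add (hfin x) measure_Ioc_lt_top.ne,
          Real.volume_Ioc, ENNReal.toReal_ofReal (by linarith)]
      rw [hslope_phi z hzx]
      have hsφ : slope φ x z = 1 := by
        rw [slope_def_field, hφz]
        have h9 : φ x + (z - x) - φ x = z - x := by ring
        rw [h9]
        exact div_self (sub_ne_zero.2 (ne_of_gt hzx))
      rw [hsφ, mul_one]
      have : slope g x z ≤ L := by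
        rw [slope_def_field, div_le_iff₀ (by linarith)]
        linarith [hgz]
      linarith [hr']
    · -- outside U: g has a nonpositive derivative at x
      obtain ⟨g', hg'0, hg'⟩ := hderiv x hx fun hxS => hxU (hSU hxS)
      have htend : Tendsto (slope g x) (𝓝[>] x) (𝓝 g') :=
        ((hasDerivAt_iff_tendsto_slope).1 hg').mono_left
          (nhdsWithin_mono x fun z hz => ne_of_gt hz)
      refine Filter.Eventually.frequently ?_
      filter_upwards [htend.eventually_lt_const (by linarith : g' < r),
        self_mem_nhdsWithin] with z hzr (hzx : x < z)
      rw [hslope_phi z hzx]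
      have hsφ : 0 ≤ slope φ x z := by
        rw [slope_def_field]
        exact div_nonneg (by linarith [hφmono hzx.le]) (by linarith)
      nlinarith [hr', hsφ]
  have hb' := key (right_mem_Icc.2 hab)
  have hφb : φ b ≤ ε / (L + 1) := by
    have h1 : volume (U ∩ Ioc a b) ≤ ENNReal.ofReal (ε / (L + 1)) :=
      (measure_mono inter_subset_left).trans hUmeas.le
    calc φ b ≤ (ENNReal.ofReal (ε / (L + 1))).toReal :=
          ENNReal.toReal_mono ENNReal.ofReal_ne_top h1
      _ = ε / (L + 1) := ENNReal.toReal_ofReal (by positivity)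
  have : L * φ b ≤ ε := by
    have h2 : L * (ε / (L + 1)) ≤ ε := by
      rw [mul_div_assoc', div_le_iff₀ hL1]
      nlinarith
    have := mul_le_mul_of_nonneg_left hφb hL
    linarith
  linarith


/-- the squared distance between two locally Lipschitz solutions of a
one-sided Lipschitz (with constant 0) differential inclusion `y' ∈ F(y)` is nonincreasing
on `[0,∞)`. -/
theorem di_osl_sq_dist_antitone (F : ℝ → Set ℝ)
    (hF : ∀ w₁ w₂ z₁ z₂ : ℝ, z₁ ∈ F w₁ → z₂ ∈ F w₂ → (z₁ - z₂) * (w₁ - w₂) ≤ 0)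
    (y₁ y₂ : ℝ → ℝ)
    (hy₁ : LocallyLipschitzOn (Set.Ici 0) y₁)
    (hy₂ : LocallyLipschitzOn (Set.Ici 0) y₂)
    (hd₁ : ∀ᵐ t ∂(volume.restrict (Set.Ici (0 : ℝ))), ∃ z ∈ F (y₁ t), HasDerivAt y₁ z t)
    (hd₂ : ∀ᵐ t ∂(volume.restrict (Set.Ici (0 : ℝ))), ∃ z ∈ F (y₂ t), HasDerivAt y₂ z t) :
    AntitoneOn (fun t => (y₁ t - y₂ t) ^ 2) (Set.Ici 0) := by
  intro a ha b hb hab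
  simp only
  set d : ℝ → ℝ := fun t => y₁ t - y₂ t with hddef
  set g : ℝ → ℝ := fun t => (y₁ t - y₂ t) ^ 2 with hgdef
  show g b ≤ g a
  have hsub : Set.Icc a b ⊆ Set.Ici (0:ℝ) := fun x hx => le_trans ha hx.1
  have hdLL : LocallyLipschitzOn (Set.Ici 0) d := hy₁.sub hy₂
  have hdc : ContinuousOn d (Set.Icc a b) := hdLL.continuousOn.mono hsub
  have hgc : ContinuousOn g (Set.Icc a b) := hdc.pow 2
  obtain ⟨M, hM⟩ := isCompact_Icc.exists_bound_of_continuousOn hdc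
  have hM0 : 0 ≤ M := le_trans (norm_nonneg _) (hM a (left_mem_Icc.2 hab))
  have key : ∀ x ∈ Set.Icc a b, ∃ v : Set ℝ, IsOpen v ∧ x ∈ v ∧
      ∃ K : ℝ≥0, LipschitzOnWith K d (v ∩ Set.Ici 0) := by
    intro x hx
    obtain ⟨K, t, ht, hKt⟩ := hdLL (hsub hx)
    obtain ⟨v, hv, hxv, hvt⟩ := mem_nhdsWithin.1 ht
    exact ⟨v, hv, hxv, K, hKt.mono hvt⟩
  choose! v hvopen hxv K hK using key
  obtain ⟨T, hTmem, hTcov⟩ :=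
    isCompact_Icc.elim_nhds_subcover v (fun x hx => (hvopen x hx).mem_nhds (hxv x hx))
  set Kb : ℝ≥0 := T.sup K with hKbdef
  set L : ℝ := 2 * M * (Kb : ℝ) with hLdef
  have hL0 : 0 ≤ L := by positivity
  have hslope : ∀ x ∈ Set.Ico a b, ∀ᶠ z in 𝓝[>] x,
      z ∈ Set.Icc a b → g z - g x ≤ L * (z - x) := by
    intro x hx
    have hxIcc : x ∈ Set.Icc a b := ⟨hx.1, hx.2.le⟩
    obtain ⟨i, hiT, hxi⟩ := Set.mem_iUnion₂.1 (hTcov hxIcc)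
    have hiIcc : i ∈ Set.Icc a b := hTmem i hiT
    have hvi : v i ∈ 𝓝 x := (hvopen i hiIcc).mem_nhds hxi
    filter_upwards [nhdsWithin_le_nhds hvi, self_mem_nhdsWithin] with z hzv (hzx : x < z) hzIcc
    have hxmem : x ∈ v i ∩ Set.Ici 0 := ⟨mem_of_mem_nhds hvi, hsub hxIcc⟩
    have hzmem : z ∈ v i ∩ Set.Ici 0 := ⟨hzv, hsub hzIcc⟩
    have hd1 : |d z - d x| ≤ (K i : ℝ) * (z - x) := by
      have := (hK i hiIcc).dist_le_mul z hzmem x hxmem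
      rwa [Real.dist_eq, Real.dist_eq, abs_of_pos (by linarith : (0:ℝ) < z - x)] at this
    have hd2 : |d z + d x| ≤ 2 * M := by
      have h1 := hM z hzIcc
      have h2 := hM x hxIcc
      rw [Real.norm_eq_abs] at h1 h2
      calc |d z + d x| ≤ |d z| + |d x| := abs_add_le _ _
        _ ≤ 2 * M := by linarith
    have hd3 : g z - g x ≤ |d z + d x| * |d z - d x| := by
      have he : g z - g x = (d z + d x) * (d z - d x) := by
        simp only [hgdef, hddef]; ring
      rw [he]
      exact (le_abs_self _).trans (abs_mul _ _).le
    have hd4 : (K i : ℝ) ≤ (Kb : ℝ) := NNReal.coe_le_coe.2 (Finset.le_sup hiT)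
    have hd5 : (0:ℝ) ≤ (K i : ℝ) := (K i).coe_nonneg
    have h6 : |d z + d x| * |d z - d x| ≤ (2 * M) * ((K i : ℝ) * (z - x)) :=
      mul_le_mul hd2 hd1 (abs_nonneg _) (by linarith)
    have h7 : (2 * M) * ((K i : ℝ) * (z - x)) ≤ 2 * M * ((Kb : ℝ) * (z - x)) := by
      apply mul_le_mul_of_nonneg_left _ (by linarith)
      exact mul_le_mul_of_nonneg_right hd4 (by linarith)
    rw [hLdef]
    linarith [hd3, h6, h7]
  have hae := ae_imp_of_ae_restrict (hd₁.and hd₂)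
  rw [MeasureTheory.ae_iff] at hae
  refine aux_key hab hL0 hgc hslope hae ?_
  intro x hx hxS
  have hP := not_not.1 hxS (le_trans ha hx.1 : x ∈ Set.Ici (0:ℝ))
  obtain ⟨⟨z₁, hz₁F, hz₁⟩, ⟨z₂, hz₂F, hz₂⟩⟩ := hP
  have hder : HasDerivAt g (2 * (y₁ x - y₂ x) * (z₁ - z₂)) x := by
    have := (hz₁.sub hz₂).pow 2
    rw [hgdef]
    simp at this
    exact this
  refine ⟨_, ?_, hder⟩
  have := hF (y₁ x) (y₂ x) z₁ z₂ hz₁F hz₂F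
  nlinarith
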